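/- For any chunk ch, the set of positions pos(ch) is the disjoint union of utxi(ch), utxo(ch), and stx(ch) (the spent transaction channels), and these three sets are pairwise disjoint. -/

import Mathlib

/-- An (idealised E)UTxO transaction: a finite set of inputs (position, key),
a finite set of outputs (position, data, validator), not both empty.
Positions (atoms) are modelled by natural numbers. -/
structure Tx (α β V : Type) where
  inputs : Set (ℕ × α)
  outputs : Set (ℕ × β × V)
  fin_inputs : inputs.Finite
  fin_outputs : outputs.Finite
  nontrivial : inputs.Nonempty ∨ outputs.Nonempty

/-- `val v d tx i` : validator `v`, carrying state data `d`, validates the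
pointed transaction `tx @ i` (a transaction `tx` with distinguished input `i`). -/
def IsChunk {α β V : Type} (val : V → β → Tx α β V → (ℕ × α) → Prop)
    (txs : List (Tx α β V)) : Prop :=
  (∀ m n (hm : m < txs.length) (hn : n < txs.length),
      ∀ o ∈ (txs.get ⟨m, hm⟩).outputs, ∀ o' ∈ (txs.get ⟨n, hn⟩).outputs,
        o.1 = o'.1 → m = n ∧ o = o') ∧
  (∀ m n (hm : m < txs.length) (hn : n < txs.length),
      ∀ i ∈ (txs.get ⟨m, hm⟩).inputs, ∀ i' ∈ (txs.get ⟨n, hn⟩).inputs,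
        i.1 = i'.1 → m = n ∧ i = i') ∧
  (∀ m n (hm : m < txs.length) (hn : n < txs.length),
      ∀ i ∈ (txs.get ⟨m, hm⟩).inputs, ∀ o ∈ (txs.get ⟨n, hn⟩).outputs,
        i.1 = o.1 → n < m ∧ val o.2.2 o.2.1 (txs.get ⟨m, hm⟩) i)

/-- Input positions of a transaction. -/
def inputPos {α β V : Type} (tx : Tx α β V) : Set ℕ := {a | ∃ i ∈ tx.inputs, i.1 = a}

/-- Output positions of a transaction. -/
def outputPos {α β V : Type} (tx : Tx α β V) : Set ℕ := {a | ∃ o ∈ tx.outputs, o.1 = a}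

/-- Positions of a transaction. -/
def posTx {α β V : Type} (tx : Tx α β V) : Set ℕ := inputPos tx ∪ outputPos tx

/-- Positions of a list of transactions. -/
def posList {α β V : Type} (txs : List (Tx α β V)) : Set ℕ :=
  {a | ∃ tx ∈ txs, a ∈ posTx tx}

/-- Unspent transaction inputs: positions of inputs not pointing to an earlier output. -/
def utxi {α β V : Type} (txs : List (Tx α β V)) : Set ℕ :=
  {a | ∃ m, ∃ hm : m < txs.length, ∃ i ∈ (txs.get ⟨m, hm⟩).inputs, i.1 = a ∧
        ∀ n, ∀ hn : n < txs.length, n < m →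
          ∀ o ∈ (txs.get ⟨n, hn⟩).outputs, o.1 ≠ a}

/-- Unspent transaction outputs: positions of outputs not pointed to by a later input. -/
def utxo {α β V : Type} (txs : List (Tx α β V)) : Set ℕ :=
  {a | ∃ n, ∃ hn : n < txs.length, ∃ o ∈ (txs.get ⟨n, hn⟩).outputs, o.1 = a ∧
        ∀ m, ∀ hm : m < txs.length, n < m →
          ∀ i ∈ (txs.get ⟨m, hm⟩).inputs, i.1 ≠ a}

/-- Spent transaction channels: positions of outputs pointed to by a later input. -/
def stx {α β V : Type} (txs : List (Tx α β V)) : Set ℕ :=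
  {a | ∃ n, ∃ hn : n < txs.length, ∃ o ∈ (txs.get ⟨n, hn⟩).outputs, o.1 = a ∧
        ∃ m, ∃ hm : m < txs.length, n < m ∧
          ∃ i ∈ (txs.get ⟨m, hm⟩).inputs, i.1 = a}

/-- Chunks `x` and `x'` commute: `x ++ x'` and `x' ++ x` have the same validity
behaviour in every context. -/
def Commuting {α β V : Type} (val : V → β → Tx α β V → (ℕ × α) → Prop)
    (x x' : List (Tx α β V)) : Prop :=
  ∀ z : List (Tx α β V),
    (IsChunk val ((x ++ x') ++ z) ↔ IsChunk val ((x' ++ x) ++ z)) ∧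
    (IsChunk val (z ++ (x ++ x')) ↔ IsChunk val (z ++ (x' ++ x)))

variable {α β V : Type}

/-- **Statement 7.** For any chunk, `pos = utxi ∪ utxo ∪ stx`, and the three
sets are pairwise disjoint. -/
theorem pos_eq_utxi_utxo_stx (val : V → β → Tx α β V → (ℕ × α) → Prop)
    (ch : List (Tx α β V)) (h : IsChunk val ch) :
    posList ch = utxi ch ∪ utxo ch ∪ stx ch ∧
    utxi ch ∩ utxo ch = ∅ ∧
    utxi ch ∩ stx ch = ∅ ∧
    utxo ch ∩ stx ch = ∅ := by
  obtain ⟨ho, hi, hio⟩ := h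
  refine ⟨?_, ?_, ?_, ?_⟩
  · ext a
    constructor
    · rintro ⟨tx, htx, hpos⟩
      obtain ⟨⟨m, hm⟩, rfl⟩ := List.mem_iff_get.mp htx
      rcases hpos with ⟨i, hi', ieq⟩ | ⟨o, ho', oeq⟩
      · by_cases hc : ∃ n, ∃ hn : n < ch.length, n < m ∧
            ∃ o ∈ (ch.get ⟨n, hn⟩).outputs, o.1 = a
        · obtain ⟨n, hn, hlt, o, ho', oeq⟩ := hc
          exact Or.inr ⟨n, hn, o, ho', oeq, m, hm, hlt, i, hi', ieq⟩
        · push_neg at hc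
          exact Or.inl (Or.inl ⟨m, hm, i, hi', ieq,
            fun n hn hlt o ho' => hc n hn hlt o ho'⟩)
      · by_cases hc : ∃ m', ∃ hm' : m' < ch.length, m < m' ∧
            ∃ i ∈ (ch.get ⟨m', hm'⟩).inputs, i.1 = a
        · obtain ⟨m', hm', hlt, i, hi', ieq⟩ := hc
          exact Or.inr ⟨m, hm, o, ho', oeq, m', hm', hlt, i, hi', ieq⟩
        · push_neg at hc
          exact Or.inl (Or.inr ⟨m, hm, o, ho', oeq,
            fun m' hm' hlt i hi' => hc m' hm' hlt i hi'⟩)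
    · rintro ((⟨m, hm, i, hi', ieq, _⟩ | ⟨n, hn, o, ho', oeq, _⟩) |
        ⟨n, hn, o, ho', oeq, _⟩)
      · exact ⟨ch.get ⟨m, hm⟩, ch.get_mem ⟨m, hm⟩, Or.inl ⟨i, hi', ieq⟩⟩
      · exact ⟨ch.get ⟨n, hn⟩, ch.get_mem ⟨n, hn⟩, Or.inr ⟨o, ho', oeq⟩⟩
      · exact ⟨ch.get ⟨n, hn⟩, ch.get_mem ⟨n, hn⟩, Or.inr ⟨o, ho', oeq⟩⟩
  · rw [Set.eq_empty_iff_forall_notMem]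
    rintro a ⟨⟨m, hm, i, hi', ieq, hno⟩, ⟨n, hn, o, ho', oeq, _⟩⟩
    obtain ⟨hlt, _⟩ := hio m n hm hn i hi' o ho' (ieq.trans oeq.symm)
    exact hno n hn hlt o ho' oeq
  · rw [Set.eq_empty_iff_forall_notMem]
    rintro a ⟨⟨m, hm, i, hi', ieq, hno⟩, ⟨n, hn, o, ho', oeq, _⟩⟩
    obtain ⟨hlt, _⟩ := hio m n hm hn i hi' o ho' (ieq.trans oeq.symm)
    exact hno n hn hlt o ho' oeq
  · rw [Set.eq_empty_iff_forall_notMem]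
    rintro a ⟨⟨n, hn, o, ho', oeq, hni⟩, ⟨n', hn', o', ho'', oeq', m, hm, hlt, i, hi', ieq⟩⟩
    obtain ⟨rfl, rfl⟩ := ho n n' hn hn' o ho' o' ho'' (oeq.trans oeq'.symm)
    exact hni m hm hlt i hi' ieq
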